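/- For all integers i, N with 2 ≤ i ≤ N, the following summation identity holds (all terms being real numbers): Σ_{k=i+1}^{N} 2i(k−i−1) / ((k−2)(k−1)k) = (N−i)(N−i−1)/(N(N−1)). -/

import Mathlib

/-- `Σ_{k=i+1}^{N} 2i(k−i−1) / ((k−2)(k−1)k) = (N−i)(N−i−1)/(N(N−1))` for `2 ≤ i ≤ N`. -/
theorem sum_duration_best (i N : ℕ) (hi : 2 ≤ i) (hiN : i ≤ N) :
    ∑ k ∈ Finset.Icc (i + 1) N,
        2 * (i : ℝ) * ((k : ℝ) - i - 1) / (((k : ℝ) - 2) * ((k : ℝ) - 1) * k)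
      = ((N : ℝ) - i) * ((N : ℝ) - i - 1) / ((N : ℝ) * ((N : ℝ) - 1)) := by
  induction N, hiN using Nat.le_induction with
  | base =>
    rw [Finset.Icc_eq_empty (by omega), Finset.sum_empty]
    simp
  | succ N hN ih =>
    rw [Finset.sum_Icc_succ_top (by omega), ih]
    have h2 : (2:ℝ) ≤ (N:ℝ) := by exact_mod_cast le_trans hi hN
    have hN0 : (N:ℝ) ≠ 0 := by linarith
    have hN1 : (N:ℝ) - 1 ≠ 0 := by linarith
    have hN1' : (N:ℝ) + 1 ≠ 0 := by linarith
    push_cast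
    have : ((N:ℝ) + 1 - 2) = N - 1 := by ring
    rw [this]
    have h' : ((N:ℝ) + 1 - 1) = N := by ring
    rw [h']
    field_simp
    ring
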